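/- Let $Y^q_t = y e^{-\beta t} + \int_0^t e^{-\beta(t-s)}\lambda q_s\,ds$ and $Y^u_t = y e^{-\beta t} + \int_0^t e^{-\beta(t-s)}\lambda u_s\,ds$ for square-integrable processes $q,u$ and constants $\beta,\lambda>0$, $y\in\mathbb R$. Then for every $T>0$, $\int_0^T (Y^q_t - Y^u_t)(q_t - u_t)\,dt = \frac{1}{2\lambda}(Y^q_T - Y^u_T)^2 + \frac{\beta}{\lambda}\int_0^T (Y^q_t - Y^u_t)^2\,dt$. In particular, if $q\neq u$ on a set of positive Lebesgue measure, this quantity is strictly positive. -/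

import Mathlib

set_option maxHeartbeats 1000000

open MeasureTheory

private lemma ow_aux_ae_zero {T : ℝ} (hT : 0 < T) {g : ℝ → ℝ}
    (hg : IntegrableOn g (Set.Ioc 0 T))
    (hF : ∀ t ∈ Set.Icc (0:ℝ) T, ∫ s in Set.Ioc (0:ℝ) t, g s = 0) :
    g =ᵐ[volume.restrict (Set.Ioc 0 T)] 0 := by
  set μ := volume.restrict (Set.Ioc (0:ℝ) T) with hμdef
  haveI : IsFiniteMeasure μ := ⟨by
    rw [hμdef, Measure.restrict_apply_univ]; exact measure_Ioc_lt_top⟩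
  have hgi : Integrable g μ := hg
  -- measurable representative
  set g' : ℝ → ℝ := hgi.1.mk g with hg'def
  have hmeas : StronglyMeasurable g' := hgi.1.stronglyMeasurable_mk
  have hae : g =ᵐ[μ] g' := hgi.1.ae_eq_mk
  have hgi' : Integrable g' μ := hgi.congr hae
  -- integral of g' over any Ioc w.r.t. μ vanishes
  have hIoc : ∀ a b : ℝ, ∫ x in Set.Ioc a b, g' x ∂μ = 0 := by
    intro a b
    have hcg : ∫ x in Set.Ioc a b, g' x ∂μ = ∫ x in Set.Ioc a b, g x ∂μ :=
      integral_congr_ae ((hae.symm).filter_mono (ae_mono Measure.restrict_le_self))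
    rw [hcg, hμdef, Measure.restrict_restrict measurableSet_Ioc, Set.Ioc_inter_Ioc]
    set a' := a ⊔ 0 with ha'
    set b' := b ⊓ T with hb'
    rcases le_or_gt b' a' with h | h
    · rw [Set.Ioc_eq_empty (not_lt.mpr h)]; simp
    · have ha0 : 0 ≤ a' := le_max_right _ _
      have hbT : b' ≤ T := min_le_right _ _
      have hA : ∫ s in Set.Ioc 0 a', g s = 0 := hF a' ⟨ha0, le_trans h.le hbT⟩
      have hB : ∫ s in Set.Ioc 0 b', g s = 0 := hF b' ⟨le_trans ha0 h.le, hbT⟩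
      have hsplit : ∫ s in Set.Ioc 0 b', g s
          = (∫ s in Set.Ioc 0 a', g s) + ∫ s in Set.Ioc a' b', g s := by
        rw [← setIntegral_union (Set.Ioc_disjoint_Ioc_of_le le_rfl) measurableSet_Ioc
          (hg.mono_set (Set.Ioc_subset_Ioc le_rfl (le_trans h.le hbT)))
          (hg.mono_set (Set.Ioc_subset_Ioc ha0 hbT)),
          Set.Ioc_union_Ioc_eq_Ioc ha0 h.le]
      rw [hB, hA] at hsplit
      linarith
  -- the positive and negative part measures agree
  set νp := μ.withDensity (fun x => ENNReal.ofReal (g' x)) with hνp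
  set νn := μ.withDensity (fun x => ENNReal.ofReal (-g' x)) with hνn
  have hfin : ∀ (f : ℝ → ℝ), Integrable f μ →
      IsFiniteMeasure (μ.withDensity (fun x => ENNReal.ofReal (f x))) := by
    intro f hf
    constructor
    rw [withDensity_apply _ MeasurableSet.univ, Measure.restrict_univ]
    calc ∫⁻ x, ENNReal.ofReal (f x) ∂μ ≤ ∫⁻ x, ‖f x‖₊ ∂μ :=
          lintegral_mono fun x => Real.ofReal_le_enorm _
      _ < ⊤ := hf.2
  haveI hfp : IsFiniteMeasure νp := hfin g' hgi'
  haveI hfn : IsFiniteMeasure νn := hfin _ hgi'.neg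
  have hpn : ∀ s : Set ℝ, MeasurableSet s →
      ∫ x in s, g' x ∂μ = (νp s).toReal - (νn s).toReal := by
    intro s hs
    rw [integral_eq_lintegral_pos_part_sub_lintegral_neg_part (hgi'.integrableOn),
      hνp, hνn, withDensity_apply _ hs, withDensity_apply _ hs]
  have hext : νp = νn := by
    refine Measure.ext_of_Ioc' νp νn (fun a b _ => (measure_lt_top νp _).ne) ?_
    intro a b _
    have h0 := hIoc a b
    rw [hpn _ measurableSet_Ioc] at h0
    have := sub_eq_zero.mp h0
    exact (ENNReal.toReal_eq_toReal_iff' (measure_ne_top _ _) (measure_ne_top _ _)).mp this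
  have hkey : ∀ s : Set ℝ, MeasurableSet s → ∫ x in s, g' x ∂μ = 0 := by
    intro s hs; rw [hpn s hs, hext, sub_self]
  have : g' =ᵐ[μ] 0 :=
    ae_eq_zero_of_forall_setIntegral_eq_of_sigmaFinite
      (fun s _ _ => hgi'.integrableOn) (fun s hs _ => hkey s hs)
  exact hae.trans this

private lemma ow_fubini_core {β T : ℝ} (hβ : 0 < β) (hT : 0 < T) {g : ℝ → ℝ}
    (hg : Integrable g (volume.restrict (Set.Ioc 0 T))) :
    ∫ t in Set.Ioc (0:ℝ) T, Real.exp (-(2*β)*t) * (∫ s in Set.Ioc (0:ℝ) t, g s) * g t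
      = (1/2) * Real.exp (-(2*β)*T) * (∫ s in Set.Ioc (0:ℝ) T, g s)^2
        + β * ∫ t in Set.Ioc (0:ℝ) T, Real.exp (-(2*β)*t) * (∫ s in Set.Ioc (0:ℝ) t, g s)^2 := by
  set μ := volume.restrict (Set.Ioc (0:ℝ) T) with hμdef
  haveI : IsFiniteMeasure μ := ⟨by
    rw [hμdef, Measure.restrict_apply_univ]; exact measure_Ioc_lt_top⟩
  set F : ℝ → ℝ := fun t => ∫ s in Set.Ioc (0:ℝ) t, g s with hFdef
  set E : ℝ → ℝ := fun r => Real.exp (-(2*β)*r) with hEdef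
  have hE0 : ∀ r, 0 < E r := fun r => Real.exp_pos _
  have hE1 : ∀ r, 0 ≤ r → E r ≤ 1 := by
    intro r hr
    rw [hEdef]
    calc Real.exp (-(2*β)*r) ≤ Real.exp 0 := Real.exp_le_exp.mpr (by nlinarith)
      _ = 1 := Real.exp_zero
  have hprodres : μ.prod μ
      = (volume.prod volume).restrict ((Set.Ioc (0:ℝ) T) ×ˢ (Set.Ioc (0:ℝ) T)) := by
    rw [hμdef, Measure.prod_restrict]
  have haeP : ∀ᵐ p : ℝ × ℝ ∂(μ.prod μ),
      p.1 ∈ Set.Ioc (0:ℝ) T ∧ p.2 ∈ Set.Ioc (0:ℝ) T := by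
    rw [hprodres]
    filter_upwards [ae_restrict_mem (measurableSet_Ioc.prod measurableSet_Ioc)] with p hp
    exact hp
  have hG : Integrable (fun p : ℝ × ℝ => g p.1 * g p.2) (μ.prod μ) := hg.mul_prod hg
  set k : ℝ × ℝ → ℝ := fun p => if p.1 ≤ p.2 then E p.2 * (g p.1 * g p.2) else 0 with hkdef
  have hkind : k = Set.indicator {p : ℝ × ℝ | p.1 ≤ p.2}
      (fun p => E p.2 * (g p.1 * g p.2)) := by
    funext p; by_cases h : p.1 ≤ p.2 <;> simp [hkdef, Set.indicator, h]
  have hEcont2 : Continuous (fun p : ℝ × ℝ => E p.2) :=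
    Real.continuous_exp.comp (continuous_const.mul continuous_snd)
  have hkmeas : AEStronglyMeasurable k (μ.prod μ) := by
    rw [hkind]
    exact (hEcont2.aestronglyMeasurable.mul hG.1).indicator
      (measurableSet_le measurable_fst measurable_snd)
  have hkint : Integrable k (μ.prod μ) := by
    refine Integrable.mono' hG.abs hkmeas ?_
    filter_upwards [haeP] with p hp
    by_cases h : p.1 ≤ p.2
    · simp only [hkdef, if_pos h]
      rw [Real.norm_eq_abs, abs_mul, abs_of_pos (hE0 _)]
      calc E p.2 * |g p.1 * g p.2| ≤ 1 * |g p.1 * g p.2| := by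
            apply mul_le_mul_of_nonneg_right (hE1 _ hp.2.1.le) (abs_nonneg _)
        _ = |g p.1 * g p.2| := one_mul _
    · simp [hkdef, h, abs_nonneg]; positivity
  set I := ∫ p, k p ∂(μ.prod μ) with hIdef
  -- Step A : I = ∫ t, E t * F t * g t ∂μ
  have hIeq : I = ∫ t, E t * F t * g t ∂μ := by
    rw [hIdef, integral_prod_symm _ hkint]
    refine integral_congr_ae ?_
    have : ∀ᵐ t ∂μ, t ∈ Set.Ioc (0:ℝ) T := by
      rw [hμdef]; exact ae_restrict_mem measurableSet_Ioc
    filter_upwards [this] with t ht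
    have hfun : (fun s => k (s, t)) = Set.indicator (Set.Iic t)
        (fun s => (E t * g t) * g s) := by
      funext s
      by_cases h : s ≤ t <;> simp [hkdef, Set.indicator, h, Set.mem_Iic] <;> ring
    rw [hfun, integral_indicator measurableSet_Iic, hμdef,
      Measure.restrict_restrict measurableSet_Iic]
    have hset : Set.Iic t ∩ Set.Ioc 0 T = Set.Ioc 0 t := by
      ext x
      simp only [Set.mem_inter_iff, Set.mem_Iic, Set.mem_Ioc]
      constructor
      · rintro ⟨h1, h2, _⟩; exact ⟨h2, h1⟩
      · rintro ⟨h1, h2⟩; exact ⟨h2, h1, h2.trans ht.2⟩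
    rw [hset, integral_const_mul]
    rw [hFdef]; ring
  -- Step B : 2 I = ∫ m with m the symmetrized kernel
  set m : ℝ × ℝ → ℝ := fun p => E (max p.1 p.2) * (g p.1 * g p.2) with hmdef
  have hmmeas : AEStronglyMeasurable m (μ.prod μ) :=
    ((Real.continuous_exp.comp
      (continuous_const.mul (continuous_fst.max continuous_snd))).aestronglyMeasurable).mul hG.1
  have hmint : Integrable m (μ.prod μ) := by
    refine Integrable.mono' hG.abs hmmeas ?_
    filter_upwards [haeP] with p hp
    rw [hmdef]
    simp only
    rw [Real.norm_eq_abs, abs_mul, abs_of_pos (hE0 _)]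
    calc E (max p.1 p.2) * |g p.1 * g p.2| ≤ 1 * |g p.1 * g p.2| :=
          mul_le_mul_of_nonneg_right (hE1 _ (le_max_of_le_left hp.1.1.le)) (abs_nonneg _)
      _ = |g p.1 * g p.2| := one_mul _
  have hswap : ∫ p : ℝ × ℝ, k (p.2, p.1) ∂(μ.prod μ) = I := by
    rw [hIdef]
    exact integral_prod_swap k
  have hdiag : (μ.prod μ) {p : ℝ × ℝ | p.1 = p.2} = 0 := by
    rw [Measure.prod_apply (measurableSet_eq_fun measurable_fst measurable_snd)]
    have hpre : ∀ x : ℝ, (Prod.mk x ⁻¹' {p : ℝ × ℝ | p.1 = p.2}) = {x} := by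
      intro x; ext y; simp [eq_comm]
    simp [hpre]
  have h2I : 2 * I = ∫ p, m p ∂(μ.prod μ) := by
    have hks : Integrable (fun p : ℝ × ℝ => k (p.2, p.1)) (μ.prod μ) := hkint.swap
    have hadd : ∫ p : ℝ × ℝ, (k p + k (p.2, p.1)) ∂(μ.prod μ) = I + I := by
      rw [integral_add hkint hks, hswap, hIdef]
    have hne : ∀ᵐ p : ℝ × ℝ ∂(μ.prod μ), p.1 ≠ p.2 := by
      rw [ae_iff]
      convert hdiag using 2
      simp
    have hcongr : (fun p : ℝ × ℝ => k p + k (p.2, p.1)) =ᵐ[μ.prod μ] m := by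
      filter_upwards [hne] with p hp
      rcases lt_or_gt_of_ne hp with h | h
      · simp only [hkdef, hmdef, if_pos h.le, if_neg (not_le.mpr h), max_eq_right h.le]
        ring
      · simp only [hkdef, hmdef, if_neg (not_le.mpr h), if_pos h.le, max_eq_left h.le]
        ring
    have := integral_congr_ae hcongr
    rw [hadd] at this
    linarith
  -- Step C : pointwise decomposition of E (max p.1 p.2)
  have hEmax : ∀ᵐ p : ℝ × ℝ ∂(μ.prod μ),
      E (max p.1 p.2) = E T + ∫ r, (if max p.1 p.2 < r then 2*β*E r else 0) ∂μ := by
    filter_upwards [haeP] with p hp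
    obtain ⟨hp1, hp2⟩ := hp
    set c := max p.1 p.2 with hcdef
    have hc0 : 0 < c := lt_max_iff.mpr (Or.inl hp1.1)
    have hcT : c ≤ T := max_le hp1.2 hp2.2
    have hind : (fun r => if c < r then 2*β*E r else 0)
        = Set.indicator (Set.Ioi c) (fun r => 2*β*E r) := by
      funext r; by_cases h : c < r <;> simp [Set.indicator, h]
    rw [hind, integral_indicator measurableSet_Ioi, hμdef,
      Measure.restrict_restrict measurableSet_Ioi]
    have hset : Set.Ioi c ∩ Set.Ioc 0 T = Set.Ioc c T := by
      ext x
      simp only [Set.mem_inter_iff, Set.mem_Ioi, Set.mem_Ioc]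
      constructor
      · rintro ⟨h1, _, h3⟩; exact ⟨h1, h3⟩
      · rintro ⟨h1, h2⟩; exact ⟨h1, hc0.trans h1, h2⟩
    rw [hset, ← intervalIntegral.integral_of_le hcT]
    have hftc : ∫ r in c..T, 2*β*E r = (-E T) - (-E c) := by
      have hderiv : ∀ x ∈ Set.uIcc c T, HasDerivAt (fun r => -E r) (2*β*E x) x := by
        intro x _
        have h1 : HasDerivAt (fun r : ℝ => -(2*β)*r) (-(2*β)) x := by
          simpa using (hasDerivAt_id x).const_mul (-(2*β))
        have h2 : HasDerivAt (fun r : ℝ => Real.exp (-(2*β)*r))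
            (Real.exp (-(2*β)*x) * (-(2*β))) x := h1.exp
        have h3 := h2.neg
        rw [hEdef]
        convert h3 using 1
        · rfl
        · rfl
        · rfl
        · simp only; ring
      have hcont : IntervalIntegrable (fun r => 2*β*E r) volume c T := by
        apply Continuous.intervalIntegrable
        exact continuous_const.mul (Real.continuous_exp.comp (continuous_const.mul continuous_id))
      exact intervalIntegral.integral_eq_sub_of_hasDerivAt hderiv hcont
    rw [hftc]; ring
  -- Step D : split ∫ m
  have hJint : Integrable (fun p : ℝ × ℝ =>
      (∫ r, (if max p.1 p.2 < r then 2*β*E r else 0) ∂μ) * (g p.1 * g p.2)) (μ.prod μ) := by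
    have hcongr : (fun p : ℝ × ℝ =>
        (∫ r, (if max p.1 p.2 < r then 2*β*E r else 0) ∂μ) * (g p.1 * g p.2))
        =ᵐ[μ.prod μ] fun p => m p - E T * (g p.1 * g p.2) := by
      filter_upwards [hEmax] with p hp
      rw [hmdef]
      simp only
      rw [hp]; ring
    exact (hmint.sub (hG.const_mul (E T))).congr hcongr.symm
  have hsplit : ∫ p, m p ∂(μ.prod μ) = E T * (F T)^2
      + ∫ p : ℝ × ℝ, (∫ r, (if max p.1 p.2 < r then 2*β*E r else 0) ∂μ)
          * (g p.1 * g p.2) ∂(μ.prod μ) := by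
    have hmc : ∫ p, m p ∂(μ.prod μ) = ∫ p : ℝ × ℝ, (E T * (g p.1 * g p.2)
        + (∫ r, (if max p.1 p.2 < r then 2*β*E r else 0) ∂μ) * (g p.1 * g p.2)) ∂(μ.prod μ) := by
      refine integral_congr_ae ?_
      filter_upwards [hEmax] with p hp
      rw [hmdef]
      simp only
      rw [hp]; ring
    rw [hmc, integral_add (hG.const_mul _) hJint, integral_const_mul, integral_prod_mul]
    have hFT : ∫ x, g x ∂μ = F T := by rw [hFdef, hμdef]
    rw [hFT]; ring
  -- Step E : swap the triple integral
  have huncurry : Integrable (Function.uncurry (fun (p : ℝ × ℝ) (r : ℝ) =>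
      (if max p.1 p.2 < r then 2*β*E r else 0) * (g p.1 * g p.2))) ((μ.prod μ).prod μ) := by
    have haeP3 : ∀ᵐ z : (ℝ × ℝ) × ℝ ∂((μ.prod μ).prod μ), z.2 ∈ Set.Ioc (0:ℝ) T := by
      have : (μ.prod μ).prod μ = ((volume.prod volume).prod volume).restrict
          (((Set.Ioc (0:ℝ) T) ×ˢ (Set.Ioc (0:ℝ) T)) ×ˢ (Set.Ioc (0:ℝ) T)) := by
        rw [hprodres, hμdef, Measure.prod_restrict]
      rw [this]
      filter_upwards [ae_restrict_mem
        (((measurableSet_Ioc.prod measurableSet_Ioc)).prod measurableSet_Ioc)] with z hz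
      exact hz.2
    have hGfst : AEStronglyMeasurable (fun z : (ℝ × ℝ) × ℝ => g z.1.1 * g z.1.2)
        ((μ.prod μ).prod μ) := hG.1.comp_fst
    have hmeasu : AEStronglyMeasurable (Function.uncurry (fun (p : ℝ × ℝ) (r : ℝ) =>
        (if max p.1 p.2 < r then 2*β*E r else 0) * (g p.1 * g p.2))) ((μ.prod μ).prod μ) := by
      have hindrep : Function.uncurry (fun (p : ℝ × ℝ) (r : ℝ) =>
          (if max p.1 p.2 < r then 2*β*E r else 0) * (g p.1 * g p.2))
          = fun z : (ℝ × ℝ) × ℝ => Set.indicator {z : (ℝ × ℝ) × ℝ | max z.1.1 z.1.2 < z.2}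
              (fun z => (2*β*E z.2) * (g z.1.1 * g z.1.2)) z := by
        funext z
        show (if max z.1.1 z.1.2 < z.2 then 2*β*E z.2 else 0) * (g z.1.1 * g z.1.2) = _
        by_cases h : max z.1.1 z.1.2 < z.2
        · simp [Set.indicator_apply, Set.mem_setOf_eq, h, sup_lt_iff.mp h]
        · have h' : ¬(z.1.1 < z.2 ∧ z.1.2 < z.2) := fun hc => h (sup_lt_iff.mpr hc)
          simp [Set.indicator_apply, Set.mem_setOf_eq, h, h']
      rw [hindrep]
      refine AEStronglyMeasurable.indicator ?_ ?_
      · exact ((continuous_const.mul (Real.continuous_exp.comp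
          (continuous_const.mul continuous_snd))).aestronglyMeasurable).mul hGfst
      · exact measurableSet_lt ((measurable_fst.fst).max (measurable_fst.snd)) measurable_snd
    have hdom : Integrable (fun z : (ℝ × ℝ) × ℝ => |g z.1.1 * g z.1.2| * (2*β))
        ((μ.prod μ).prod μ) := hG.abs.mul_prod (integrable_const _)
    refine Integrable.mono' hdom hmeasu ?_
    filter_upwards [haeP3] with z hz
    show ‖(if max z.1.1 z.1.2 < z.2 then 2*β*E z.2 else 0) * (g z.1.1 * g z.1.2)‖
      ≤ |g z.1.1 * g z.1.2| * (2*β)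
    rw [Real.norm_eq_abs, abs_mul]
    by_cases h : max z.1.1 z.1.2 < z.2
    · rw [if_pos h, abs_of_nonneg (by positivity : (0:ℝ) ≤ 2*β*E z.2)]
      rw [mul_comm (|g z.1.1 * g z.1.2|) (2*β)]
      apply mul_le_mul_of_nonneg_right _ (abs_nonneg _)
      calc 2*β*E z.2 ≤ 2*β*1 := by
            apply mul_le_mul_of_nonneg_left (hE1 _ hz.1.le) (by positivity)
        _ = 2*β := mul_one _
    · rw [if_neg h]
      simp only [abs_zero, zero_mul]
      positivity
  have htriple : ∫ p : ℝ × ℝ, (∫ r, (if max p.1 p.2 < r then 2*β*E r else 0) ∂μ)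
        * (g p.1 * g p.2) ∂(μ.prod μ)
      = ∫ r, (∫ p : ℝ × ℝ, (if max p.1 p.2 < r then 2*β*E r else 0)
          * (g p.1 * g p.2) ∂(μ.prod μ)) ∂μ := by
    have hmove : ∀ p : ℝ × ℝ, (∫ r, (if max p.1 p.2 < r then 2*β*E r else 0) ∂μ) * (g p.1 * g p.2)
        = ∫ r, (if max p.1 p.2 < r then 2*β*E r else 0) * (g p.1 * g p.2) ∂μ := by
      intro p
      rw [integral_mul_const]
    simp_rw [hmove]
    exact integral_integral_swap huncurry
  -- Step F : evaluate the inner integral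
  have hinner : ∀ᵐ r ∂μ, (∫ p : ℝ × ℝ, (if max p.1 p.2 < r then 2*β*E r else 0)
      * (g p.1 * g p.2) ∂(μ.prod μ)) = 2*β*(E r * (F r)^2) := by
    have : ∀ᵐ r ∂μ, r ∈ Set.Ioc (0:ℝ) T := by
      rw [hμdef]; exact ae_restrict_mem measurableSet_Ioc
    filter_upwards [this] with r hr
    have hfact : ∀ p : ℝ × ℝ, (if max p.1 p.2 < r then 2*β*E r else 0) * (g p.1 * g p.2)
        = (2*β*E r) * ((if p.1 < r then g p.1 else 0) * (if p.2 < r then g p.2 else 0)) := by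
      intro p
      by_cases h1 : p.1 < r <;> by_cases h2 : p.2 < r <;>
        simp [max_lt_iff, h1, h2] <;> ring
    simp_rw [hfact]
    rw [integral_const_mul]
    have hpm : ∫ a : ℝ × ℝ, (if a.1 < r then g a.1 else 0) * (if a.2 < r then g a.2 else 0)
          ∂(μ.prod μ)
        = (∫ s, (if s < r then g s else 0) ∂μ) * ∫ s, (if s < r then g s else 0) ∂μ :=
      integral_prod_mul (fun s => if s < r then g s else 0) (fun s => if s < r then g s else 0)
    rw [hpm]
    have hhalf : ∫ s, (if s < r then g s else 0) ∂μ = F r := by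
      have hind : (fun s => if s < r then g s else 0) = Set.indicator (Set.Iio r) g := by
        funext s; by_cases h : s < r <;> simp [Set.indicator, h]
      rw [hind, integral_indicator measurableSet_Iio, hμdef,
        Measure.restrict_restrict measurableSet_Iio]
      have hset : Set.Iio r ∩ Set.Ioc 0 T = Set.Ioo 0 r := by
        ext x
        simp only [Set.mem_inter_iff, Set.mem_Iio, Set.mem_Ioc, Set.mem_Ioo]
        constructor
        · rintro ⟨h1, h2, _⟩; exact ⟨h2, h1⟩
        · rintro ⟨h1, h2⟩; exact ⟨h2, h1, h2.le.trans hr.2⟩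
      rw [hset, hFdef]
      exact setIntegral_congr_set Ioo_ae_eq_Ioc
    rw [hhalf]; ring
  -- put everything together
  have hfin2 : ∫ r, (∫ p : ℝ × ℝ, (if max p.1 p.2 < r then 2*β*E r else 0)
      * (g p.1 * g p.2) ∂(μ.prod μ)) ∂μ = 2*β * ∫ r, E r * (F r)^2 ∂μ := by
    rw [integral_congr_ae hinner]
    simp_rw [mul_assoc]
    rw [integral_const_mul, integral_const_mul]
  have hmain : 2 * I = E T * (F T)^2 + 2*β * ∫ r, E r * (F r)^2 ∂μ := by
    rw [h2I, hsplit, htriple, hfin2]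
  have hgoalL : ∫ t in Set.Ioc (0:ℝ) T, Real.exp (-(2*β)*t) * (∫ s in Set.Ioc (0:ℝ) t, g s) * g t
      = I := by rw [hIeq, hμdef, hFdef, hEdef]
  have hgoalR : ∫ t in Set.Ioc (0:ℝ) T, Real.exp (-(2*β)*t) * (∫ s in Set.Ioc (0:ℝ) t, g s)^2
      = ∫ r, E r * (F r)^2 ∂μ := by rw [hμdef, hFdef, hEdef]
  rw [hgoalL, hgoalR]
  have hET : Real.exp (-(2*β)*T) = E T := by rw [hEdef]
  have hFT : (∫ s in Set.Ioc (0:ℝ) T, g s) = F T := by rw [hFdef]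
  rw [hET, hFT]
  linarith

private lemma ow_pos_core {β T : ℝ} (hβ : 0 < β) (hT : 0 < T) {g : ℝ → ℝ}
    (hg : IntegrableOn g (Set.Ioc 0 T))
    (hgne : ¬ (g =ᵐ[volume.restrict (Set.Ioc 0 T)] 0)) :
    0 < ∫ t in Set.Ioc (0:ℝ) T,
      Real.exp (-(2*β)*t) * (∫ s in Set.Ioc (0:ℝ) t, g s)^2 := by
  have hgIcc : IntegrableOn g (Set.Icc 0 T) := by
    rw [integrableOn_Icc_iff_integrableOn_Ioc]; exact hg
  have hFcont : ContinuousOn (fun t => ∫ s in Set.Ioc (0:ℝ) t, g s) (Set.Icc 0 T) :=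
    intervalIntegral.continuousOn_primitive hgIcc
  have hEF2int : IntegrableOn
      (fun t => Real.exp (-(2*β)*t) * (∫ s in Set.Ioc (0:ℝ) t, g s)^2) (Set.Ioc 0 T) := by
    refine IntegrableOn.mono_set ?_ Set.Ioc_subset_Icc_self
    refine ContinuousOn.integrableOn_compact isCompact_Icc ?_
    exact ((Real.continuous_exp.comp
      (continuous_const.mul continuous_id)).continuousOn).mul (hFcont.pow 2)
  by_contra hnot
  push_neg at hnot
  have hnn : 0 ≤ᵐ[volume.restrict (Set.Ioc (0:ℝ) T)]
      fun t => Real.exp (-(2*β)*t) * (∫ s in Set.Ioc (0:ℝ) t, g s)^2 :=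
    Filter.Eventually.of_forall (fun t => by positivity)
  have hz : ∫ t in Set.Ioc (0:ℝ) T,
      Real.exp (-(2*β)*t) * (∫ s in Set.Ioc (0:ℝ) t, g s)^2 = 0 :=
    le_antisymm hnot (integral_nonneg_of_ae hnn)
  have hae0 : (fun t => Real.exp (-(2*β)*t) * (∫ s in Set.Ioc (0:ℝ) t, g s)^2)
      =ᵐ[volume.restrict (Set.Ioc (0:ℝ) T)] 0 :=
    (integral_eq_zero_iff_of_nonneg_ae hnn hEF2int).mp hz
  have hFae : ∀ᵐ t ∂(volume.restrict (Set.Ioc (0:ℝ) T)),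
      (∫ s in Set.Ioc (0:ℝ) t, g s) = 0 := by
    filter_upwards [hae0] with t ht
    have h1 : Real.exp (-(2*β)*t) * (∫ s in Set.Ioc (0:ℝ) t, g s)^2 = 0 := ht
    rcases mul_eq_zero.mp h1 with h | h
    · exact absurd h (Real.exp_ne_zero _)
    · exact (pow_eq_zero_iff two_ne_zero).mp h
  have hFzero : ∀ t ∈ Set.Ioc (0:ℝ) T, (∫ s in Set.Ioc (0:ℝ) t, g s) = 0 := by
    by_contra hcon
    push_neg at hcon
    obtain ⟨t₀, ht₀, hne⟩ := hcon
    have hc : ContinuousWithinAt (fun t => ∫ s in Set.Ioc (0:ℝ) t, g s) (Set.Icc 0 T) t₀ :=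
      hFcont t₀ (Set.Ioc_subset_Icc_self ht₀)
    have hev : ∀ᶠ x in nhdsWithin t₀ (Set.Icc 0 T),
        (∫ s in Set.Ioc (0:ℝ) x, g s) ≠ 0 := hc.eventually_ne hne
    rw [eventually_nhdsWithin_iff, Metric.eventually_nhds_iff] at hev
    obtain ⟨ε, hε, hball⟩ := hev
    set a₁ := max (t₀ - ε/2) (t₀/2) with ha₁
    have ht₀0 : 0 < t₀ := ht₀.1
    have ha₁t : a₁ < t₀ := max_lt (by linarith) (by linarith)
    have ha₁0 : 0 ≤ a₁ := le_trans (by linarith : (0:ℝ) ≤ t₀/2) (le_max_right _ _)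
    have hsub : Set.Ioc a₁ t₀ ⊆ {t | (∫ s in Set.Ioc (0:ℝ) t, g s) ≠ 0} := by
      intro x hx
      have hx1 : t₀ - ε/2 < x := lt_of_le_of_lt (le_max_left _ _) hx.1
      have hd : dist x t₀ < ε := by
        rw [Real.dist_eq, abs_of_nonpos (by linarith [hx.2])]
        linarith
      exact hball hd ⟨ha₁0.trans hx.1.le, hx.2.trans ht₀.2⟩
    have hFnull : (volume.restrict (Set.Ioc (0:ℝ) T))
        {t | (∫ s in Set.Ioc (0:ℝ) t, g s) ≠ 0} = 0 := hFae
    have hμpos : 0 < (volume.restrict (Set.Ioc (0:ℝ) T)) (Set.Ioc a₁ t₀) := by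
      rw [Measure.restrict_apply measurableSet_Ioc,
        Set.inter_eq_self_of_subset_left
          (fun x hx => Set.mem_Ioc.mpr ⟨lt_of_le_of_lt ha₁0 hx.1, hx.2.trans ht₀.2⟩),
        Real.volume_Ioc]
      exact ENNReal.ofReal_pos.mpr (by linarith)
    exact hμpos.ne' (measure_mono_null hsub hFnull)
  refine hgne (ow_aux_ae_zero hT hg ?_)
  intro t ht
  rcases eq_or_lt_of_le ht.1 with h | h
  · rw [← h]; simp
  · exact hFzero t ⟨h, ht.2⟩

/-- The Obizhaeva–Wang transient price impact driven by a trading rate `q`: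
`Y^q_t = y e^{-β t} + ∫₀ᵗ e^{-β (t-s)} λ q_s ds`. -/
noncomputable def owImpact (β lam y : ℝ) (q : ℝ → ℝ) (t : ℝ) : ℝ :=
  y * Real.exp (-β * t) + ∫ s in (0:ℝ)..t, Real.exp (-β * (t - s)) * (lam * q s)

/-- for square-integrable `q, u` and `β, λ > 0`,
`∫₀ᵀ (Y^q_t - Y^u_t)(q_t - u_t) dt = (1/(2λ)) (Y^q_T - Y^u_T)² + (β/λ) ∫₀ᵀ (Y^q_t - Y^u_t)² dt`,
and this quantity is strictly positive whenever `q ≠ u` on a set of positive Lebesgue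
measure in `[0, T]`. -/
theorem ow_impact_identity
    (β lam y T : ℝ) (hβ : 0 < β) (hlam : 0 < lam) (hT : 0 < T)
    (q u : ℝ → ℝ)
    (hq : MemLp q 2 (volume.restrict (Set.Icc 0 T)))
    (hu : MemLp u 2 (volume.restrict (Set.Icc 0 T))) :
    ((∫ t in (0:ℝ)..T, (owImpact β lam y q t - owImpact β lam y u t) * (q t - u t))
      = (1 / (2 * lam)) * (owImpact β lam y q T - owImpact β lam y u T) ^ 2
        + (β / lam) * ∫ t in (0:ℝ)..T, (owImpact β lam y q t - owImpact β lam y u t) ^ 2)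
    ∧ (0 < volume {t ∈ Set.Icc (0:ℝ) T | q t ≠ u t} →
        0 < ∫ t in (0:ℝ)..T, (owImpact β lam y q t - owImpact β lam y u t) * (q t - u t)) := by
  haveI : IsFiniteMeasure (volume.restrict (Set.Icc (0:ℝ) T)) :=
    ⟨by rw [Measure.restrict_apply_univ]; exact measure_Icc_lt_top⟩
  have hwInt : IntegrableOn (fun t => q t - u t) (Set.Icc 0 T) := (hq.sub hu).integrable one_le_two
  set g : ℝ → ℝ := fun s => Real.exp (β * s) * (lam * (q s - u s)) with hgdef
  have hgInt : IntegrableOn g (Set.Ioc 0 T) := by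
    have h1 : IntegrableOn (fun t => q t - u t) (Set.Ioc 0 T) :=
      hwInt.mono_set Set.Ioc_subset_Icc_self
    have h2 : IntegrableOn (fun s => lam * (q s - u s)) (Set.Ioc 0 T) := h1.const_mul lam
    refine Integrable.bdd_mul (c := Real.exp (β*T)) h2 ?_ ?_
    · exact (Real.continuous_exp.comp (continuous_const.mul continuous_id)).aestronglyMeasurable
    · filter_upwards [ae_restrict_mem measurableSet_Ioc] with s hs
      rw [Real.norm_eq_abs, abs_of_pos (Real.exp_pos _)]
      exact Real.exp_le_exp.mpr (mul_le_mul_of_nonneg_left hs.2 hβ.le)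
  have hIoc_subset : Set.Ioc (0:ℝ) T ⊆ Set.Icc (0:ℝ) T := Set.Ioc_subset_Icc_self
  -- impact difference in terms of the primitive of g
  have hD : ∀ t ∈ Set.Icc (0:ℝ) T,
      owImpact β lam y q t - owImpact β lam y u t
        = Real.exp (-β*t) * ∫ s in Set.Ioc (0:ℝ) t, g s := by
    intro t ht
    have ht0 : (0:ℝ) ≤ t := ht.1
    have hmk : ∀ v : ℝ → ℝ, MemLp v 2 (volume.restrict (Set.Icc 0 T)) →
        IntervalIntegrable (fun s => Real.exp (-β * (t - s)) * (lam * v s)) volume 0 t := by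
      intro v hv
      rw [intervalIntegrable_iff_integrableOn_Ioc_of_le ht0]
      refine Integrable.bdd_mul (c := 1) ?_ ?_ ?_
      · have hvI : IntegrableOn v (Set.Icc 0 T) := hv.integrable one_le_two
        exact (hvI.mono_set (fun x hx => ⟨hx.1.le, hx.2.trans ht.2⟩)).const_mul lam
      · exact (Real.continuous_exp.comp
          (continuous_const.mul (continuous_const.sub continuous_id))).aestronglyMeasurable
      · filter_upwards [ae_restrict_mem measurableSet_Ioc] with s hs
        rw [Real.norm_eq_abs, abs_of_pos (Real.exp_pos _)]
        calc Real.exp (-β * (t - s)) ≤ Real.exp 0 :=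
              Real.exp_le_exp.mpr (by nlinarith [hs.2])
          _ = 1 := Real.exp_zero
    rw [owImpact, owImpact, add_sub_add_left_eq_sub,
      ← intervalIntegral.integral_sub (hmk q hq) (hmk u hu),
      intervalIntegral.integral_of_le ht0, ← integral_const_mul]
    refine setIntegral_congr_fun measurableSet_Ioc ?_
    intro s _
    have e2 : Real.exp (-β * (t - s)) = Real.exp (-β*t) * Real.exp (β*s) := by
      rw [← Real.exp_add]; ring_nf
    rw [hgdef]
    simp only
    rw [e2]; ring
  -- the three integral conversions
  have hLHSp : ∀ t ∈ Set.Ioc (0:ℝ) T,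
      Real.exp (-(2*β)*t) * (∫ s in Set.Ioc (0:ℝ) t, g s) * g t
        = lam * ((owImpact β lam y q t - owImpact β lam y u t) * (q t - u t)) := by
    intro t ht
    rw [hD t (hIoc_subset ht), hgdef]
    simp only
    have e2 : Real.exp (-(2*β)*t) = Real.exp (-β*t) * Real.exp (-β*t) := by
      rw [← Real.exp_add]; ring_nf
    have e3 : Real.exp (-β*t) * Real.exp (β*t) = 1 := by
      rw [← Real.exp_add]; simp
    rw [e2]
    linear_combination (Real.exp (-β*t) * (∫ s in Set.Ioc (0:ℝ) t, g s) * lam * (q t - u t)) * e3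
  have hLHS : ∫ t in Set.Ioc (0:ℝ) T, Real.exp (-(2*β)*t) * (∫ s in Set.Ioc (0:ℝ) t, g s) * g t
      = lam * ∫ t in (0:ℝ)..T, (owImpact β lam y q t - owImpact β lam y u t) * (q t - u t) := by
    rw [intervalIntegral.integral_of_le hT.le, ← integral_const_mul]
    exact setIntegral_congr_fun measurableSet_Ioc hLHSp
  have hSQp : ∀ t ∈ Set.Ioc (0:ℝ) T,
      (owImpact β lam y q t - owImpact β lam y u t)^2
        = Real.exp (-(2*β)*t) * (∫ s in Set.Ioc (0:ℝ) t, g s)^2 := by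
    intro t ht
    rw [hD t (hIoc_subset ht)]
    have e2 : Real.exp (-(2*β)*t) = Real.exp (-β*t) * Real.exp (-β*t) := by
      rw [← Real.exp_add]; ring_nf
    rw [e2]; ring
  have hSQ : ∫ t in (0:ℝ)..T, (owImpact β lam y q t - owImpact β lam y u t)^2
      = ∫ t in Set.Ioc (0:ℝ) T, Real.exp (-(2*β)*t) * (∫ s in Set.Ioc (0:ℝ) t, g s)^2 := by
    rw [intervalIntegral.integral_of_le hT.le]
    exact setIntegral_congr_fun measurableSet_Ioc hSQp
  have hDT2 : (owImpact β lam y q T - owImpact β lam y u T)^2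
      = Real.exp (-(2*β)*T) * (∫ s in Set.Ioc (0:ℝ) T, g s)^2 := hSQp T ⟨hT, le_rfl⟩
  have hcore := ow_fubini_core hβ hT hgInt
  -- part 1
  have part1 : (∫ t in (0:ℝ)..T, (owImpact β lam y q t - owImpact β lam y u t) * (q t - u t))
      = (1 / (2 * lam)) * (owImpact β lam y q T - owImpact β lam y u T) ^ 2
        + (β / lam) * ∫ t in (0:ℝ)..T, (owImpact β lam y q t - owImpact β lam y u t) ^ 2 := by
    have h1 : lam * ∫ t in (0:ℝ)..T,
        (owImpact β lam y q t - owImpact β lam y u t) * (q t - u t)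
        = (1/2) * Real.exp (-(2*β)*T) * (∫ s in Set.Ioc (0:ℝ) T, g s)^2
          + β * ∫ t in Set.Ioc (0:ℝ) T,
              Real.exp (-(2*β)*t) * (∫ s in Set.Ioc (0:ℝ) t, g s)^2 := by
      rw [← hLHS]; exact hcore
    rw [hDT2, hSQ]
    have hlam' : lam ≠ 0 := hlam.ne'
    have h2 : (∫ t in (0:ℝ)..T, (owImpact β lam y q t - owImpact β lam y u t) * (q t - u t))
        = ((1/2) * Real.exp (-(2*β)*T) * (∫ s in Set.Ioc (0:ℝ) T, g s)^2
          + β * ∫ t in Set.Ioc (0:ℝ) T,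
              Real.exp (-(2*β)*t) * (∫ s in Set.Ioc (0:ℝ) t, g s)^2) / lam := by
      rw [← h1]; field_simp
    rw [h2]
    field_simp
  refine ⟨part1, ?_⟩
  -- part 2 : positivity
  intro hpos
  have hgne : ¬ (g =ᵐ[volume.restrict (Set.Ioc (0:ℝ) T)] 0) := by
    intro hg0
    have hw0 : (fun t => q t - u t) =ᵐ[volume.restrict (Set.Ioc (0:ℝ) T)] 0 := by
      filter_upwards [hg0] with s hs
      have h1 : Real.exp (β*s) * (lam * (q s - u s)) = 0 := hs
      rcases mul_eq_zero.mp h1 with h | h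
      · exact absurd h (Real.exp_ne_zero _)
      · rcases mul_eq_zero.mp h with h' | h'
        · exact absurd h' hlam.ne'
        · exact h'
    have hvol : volume ({s | q s - u s ≠ 0} ∩ Set.Ioc (0:ℝ) T) = 0 := by
      have h2 := hw0
      rw [Filter.EventuallyEq, ae_iff] at h2
      rw [Measure.restrict_apply' measurableSet_Ioc] at h2
      simpa using h2
    have hzero : volume {t | t ∈ Set.Icc (0:ℝ) T ∧ q t ≠ u t} = 0 := by
      refine measure_mono_null ?_
        (measure_union_null hvol (measure_singleton (0:ℝ)))
      rintro t ⟨⟨h0, hT'⟩, hne⟩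
      by_cases h : t = 0
      · right; exact h
      · left; exact ⟨sub_ne_zero.mpr hne, lt_of_le_of_ne h0 (Ne.symm h), hT'⟩
    rw [hzero] at hpos
    exact lt_irrefl 0 hpos
  have hSpos := ow_pos_core hβ hT hgInt hgne
  rw [part1]
  rw [hSQ]
  rw [hDT2]
  have h1a : (0:ℝ) < 1 / (2 * lam) := by
    apply div_pos one_pos; linarith
  have h1 : 0 ≤ (1 / (2 * lam)) * (Real.exp (-(2*β)*T) * (∫ s in Set.Ioc (0:ℝ) T, g s)^2) :=
    mul_nonneg h1a.le (mul_nonneg (Real.exp_pos _).le (sq_nonneg _))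
  have h2 : 0 < (β / lam) * ∫ t in Set.Ioc (0:ℝ) T,
      Real.exp (-(2*β)*t) * (∫ s in Set.Ioc (0:ℝ) t, g s)^2 :=
    mul_pos (div_pos hβ hlam) hSpos
  linarith
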